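/- (Frostman shift of a weighted model space) Let θ be an inner function, α ∈ ℂ with |α| < 1, and set θ_α(z) = (α − θ(z))/(1 − ᾱθ(z)) and g_α(z) = (1 − ᾱθ(z))/√(1 − |α|²). If p is an isometric multiplier on K_θ, then θ_α is an inner function, p·g_α is an isometric multiplier on K_{θ_α}, and pK_θ = (p·g_α)K_{θ_α}. -/

import Mathlib

open MeasureTheory Complex Filter

noncomputable section

namespace HankelSchmidt

instance fact_two_pi_pos : Fact (0 < 2 * Real.pi) := ⟨Real.two_pi_pos⟩

/-- The circle `𝕋`, realized as `ℝ / 2πℤ`. -/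
abbrev Tc : Type := AddCircle (2 * Real.pi)

/-- Normalized arc-length (Haar) measure on the circle. -/
abbrev muc : Measure Tc := AddCircle.haarAddCircle

/-- The space `L²(𝕋)`. -/
abbrev Ltwo := Lp ℂ 2 muc

/-- The Hardy space `H²`: the subspace of `L²(𝕋)` of functions whose Fourier coefficients
of negative index vanish. -/
def Hardy : Submodule ℂ Ltwo where
  carrier := {f | ∀ n : ℤ, n < 0 → fourierBasis.repr f n = 0}
  add_mem' := by
    intro a b ha hb n hn
    simp [map_add, lp.coeFn_add, ha n hn, hb n hn]
  zero_mem' := by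
    intro n hn
    simp
  smul_mem' := by
    intro c a ha n hn
    simp [_root_.map_smul, lp.coeFn_smul, ha n hn]

theorem hardy_isClosed : IsClosed (Hardy : Set Ltwo) := by
  have hset : (Hardy : Set Ltwo) =
      ⋂ (n : ℤ) (_ : n < 0), {f : Ltwo | fourierBasis.repr f n = 0} := by
    ext f
    simp only [Set.mem_iInter, Set.mem_setOf_eq]
    rfl
  rw [hset]
  refine isClosed_iInter fun n => isClosed_iInter fun hn => ?_
  have hcont : Continuous fun f : Ltwo => fourierBasis.repr f n := by
    have h1 : Continuous fun g : lp (fun _ : ℤ => ℂ) 2 => g n :=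
      (continuous_apply n).comp lp.uniformContinuous_coe.continuous
    exact h1.comp fourierBasis.repr.continuous
  exact isClosed_eq hcont continuous_const

instance : CompleteSpace (Hardy : Submodule ℂ Ltwo) := hardy_isClosed.completeSpace_coe

/-- The Hardy space as a type. -/
abbrev Hd := (Hardy : Submodule ℂ Ltwo)

/-- The orthogonal projection `P : L²(𝕋) → H²`. -/
def P2 : Ltwo → Hd := fun f => Submodule.orthogonalProjectionOnto Hardy f

/-- The orthogonal projection `P`, viewed as a map `L²(𝕋) → L²(𝕋)` with range `H²`. -/
def PL : Ltwo → Ltwo := fun f => ((P2 f : Hd) : Ltwo)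

theorem fourierCoeff_congr_ae {f g : Tc → ℂ} (h : f =ᵐ[muc] g) (n : ℤ) :
    fourierCoeff f n = fourierCoeff g n :=
  integral_congr_ae (h.mono fun x hx => by dsimp only; rw [hx])

theorem mem_Hardy_iff {f : Ltwo} :
    f ∈ Hardy ↔ ∀ n : ℤ, n < 0 → fourierCoeff (f : Tc → ℂ) n = 0 := by
  constructor
  · intro hf n hn; rw [← fourierBasis_repr]; exact hf n hn
  · intro hf n hn; rw [fourierBasis_repr]; exact hf n hn

/-- Pointwise multiplication by a bounded measurable function preserves `L²`. -/
theorem memLp_mul_of_bounded {g : Tc → ℂ} (hg : AEStronglyMeasurable g muc) {C : ℝ}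
    (hb : ∀ᵐ x ∂muc, ‖g x‖ ≤ C) (f : Ltwo) :
    MemLp (fun x => g x * (f : Tc → ℂ) x) 2 muc := by
  refine MemLp.of_le_mul (c := C) (Lp.memLp f) (hg.mul (Lp.aestronglyMeasurable f)) ?_
  filter_upwards [hb] with x hx
  rw [norm_mul]
  exact mul_le_mul_of_nonneg_right hx (norm_nonneg _)

theorem fourier_abs (n : ℤ) (x : Tc) : ‖fourier n x‖ = 1 := by
  rw [fourier_apply]; exact Circle.norm_coe _

theorem fourier_norm_one (n : ℤ) (x : Tc) : ‖fourier n x‖ ≤ 1 :=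
  le_of_eq (fourier_abs n x)

/-- Multiplication of an `L²` function by the monomial `z^n`. -/
def mulF (n : ℤ) (f : Ltwo) : Ltwo :=
  (memLp_mul_of_bounded ((map_continuous (fourier n)).aestronglyMeasurable)
    (Eventually.of_forall (fourier_norm_one n)) f).toLp _

theorem mulF_coe (n : ℤ) (f : Ltwo) :
    (mulF n f : Tc → ℂ) =ᵐ[muc] fun x => fourier n x * (f : Tc → ℂ) x :=
  MemLp.coeFn_toLp _

theorem fourierCoeff_fourier_mul (f : Tc → ℂ) (m n : ℤ) :
    fourierCoeff (fun x => fourier m x * f x) n = fourierCoeff f (n - m) := by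
  unfold fourierCoeff
  refine integral_congr_ae (Eventually.of_forall fun x => ?_)
  have h : @fourier (2 * Real.pi) (-(n - m)) x = fourier (-n) x * fourier m x := by
    rw [show -(n - m) = -n + m by ring, fourier_add]
  simp only [smul_eq_mul, h]
  ring

/-- The shift operator `S : H² → H²`, `(Sf)(z) = z·f(z)`. -/
def Sop (f : Hd) : Hd :=
  ⟨mulF 1 (f : Ltwo), by
    rw [mem_Hardy_iff]
    intro n hn
    rw [fourierCoeff_congr_ae (mulF_coe 1 (f : Ltwo)) n, fourierCoeff_fourier_mul]
    exact (mem_Hardy_iff.mp f.2) (n - 1) (by omega)⟩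

/-- The adjoint shift `S* : H² → H²`, `S*f = P(z̄·f)`. -/
def SstarOp (f : Hd) : Hd := P2 (mulF (-1) (f : Ltwo))

/-- The constant function `𝟙 ∈ H²`. -/
def oneH : Hd :=
  ⟨fourierLp 2 0, by
    rw [mem_Hardy_iff]
    intro n hn
    rw [← fourierBasis_repr]
    have h1 : (fourierLp (T := 2 * Real.pi) 2 0) = fourierBasis 0 := by
      rw [coe_fourierBasis]
    rw [h1, HilbertBasis.repr_self, lp.single_apply]
    simp [Pi.single_apply]
    omega⟩

/-- The inner product on `H²`, linear in the FIRST argument (the paper's convention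
`⟨f, g⟩ = ∫ f ḡ`). -/
def ipH (f g : Hd) : ℂ := @inner ℂ Ltwo _ (g : Ltwo) (f : Ltwo)

/-- The inner product on `L²(𝕋)`, linear in the FIRST argument. -/
def ipL (f g : Ltwo) : ℂ := @inner ℂ Ltwo _ g f

/-- `θ ∈ H²` is an inner function if `|θ(z)| = 1` a.e. on `𝕋`. -/
def IsInnerFn (θ : Hd) : Prop := ∀ᵐ x ∂muc, ‖((θ : Ltwo) : Tc → ℂ) x‖ = 1

/-- The set `θ·H² ⊆ L²(𝕋)` of pointwise a.e. products `θ·f`, `f ∈ H²`. -/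
def thetaHardy (θ : Hd) : Set Ltwo :=
  {g : Ltwo | ∃ f : Hd, (g : Tc → ℂ) =ᵐ[muc]
    fun x => ((θ : Ltwo) : Tc → ℂ) x * ((f : Ltwo) : Tc → ℂ) x}

/-- The model space `K_θ = H² ∩ (θH²)^⊥`, as a subset of `L²(𝕋)`. -/
def KspaceL (θ : Hd) : Set Ltwo :=
  {h : Ltwo | h ∈ Hardy ∧ ∀ g ∈ thetaHardy θ, ipL h g = 0}

/-- The model space `K_θ`, as a subset of `H²`. -/
def Kspace (θ : Hd) : Set Hd := {h : Hd | (h : Ltwo) ∈ KspaceL θ}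

/-- `p` is an isometric multiplier on `K_θ`: `p` is measurable and, for every `h ∈ K_θ`,
the pointwise product `p·h` lies in `H²` and has the same norm as `h`. -/
def IsIsomMult (p : Tc → ℂ) (θ : Hd) : Prop :=
  Measurable p ∧ ∀ h ∈ Kspace θ, ∃ g : Hd,
    ((g : Ltwo) : Tc → ℂ) =ᵐ[muc] (fun x => p x * ((h : Ltwo) : Tc → ℂ) x) ∧
    ‖(g : Ltwo)‖ = ‖(h : Ltwo)‖

/-- The subspace `p·K_θ = {p·h : h ∈ K_θ}` of `H²`. -/
def wModel (p : Tc → ℂ) (θ : Hd) : Set Hd :=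
  {g : Hd | ∃ h ∈ Kspace θ, ((g : Ltwo) : Tc → ℂ) =ᵐ[muc]
    fun x => p x * ((h : Ltwo) : Tc → ℂ) x}

/-- A bounded Hankel operator on `H²`: a continuous antilinear map `H : H² → H²`
satisfying `S*H = HS`. -/
def IsHankelOp (H : Hd →L⋆[ℂ] Hd) : Prop := ∀ f : Hd, SstarOp (H f) = H (Sop f)

/-- A bounded measurable symbol on the circle (an `L^∞` function). -/
def IsBddFn (u : Tc → ℂ) : Prop := Measurable u ∧ ∃ C : ℝ, ∀ᵐ x ∂muc, ‖u x‖ ≤ C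

theorem memLp_mul_conj {u : Tc → ℂ} (hu : IsBddFn u) (f : Ltwo) :
    MemLp (fun x => u x * (starRingEnd ℂ) ((f : Tc → ℂ) x)) 2 muc := by
  obtain ⟨hmeas, C, hC⟩ := hu
  refine MemLp.of_le_mul (c := C) (Lp.memLp f)
    (hmeas.aestronglyMeasurable.mul
      (continuous_star.comp_aestronglyMeasurable (Lp.aestronglyMeasurable f))) ?_
  filter_upwards [hC] with x hx
  rw [norm_mul, RCLike.norm_conj]
  exact mul_le_mul_of_nonneg_right hx (norm_nonneg _)

/-- The Hankel operator with symbol `u`: `H_u f = P(u·f̄)`, defined on all of `L²(𝕋)`. -/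
def hankelL (u : Tc → ℂ) (hu : IsBddFn u) : Ltwo → Ltwo :=
  fun f => PL ((memLp_mul_conj hu f).toLp _)

/-- The Möbius transformation `μ(z) = (α − z)/(1 − ᾱz)` of the unit disk. -/
def mobius (α z : ℂ) : ℂ := (α - z) / (1 - (starRingEnd ℂ) α * z)

/-- The point `e^{ix} ∈ ℂ` corresponding to `x ∈ 𝕋`. -/
def circlePt (x : Tc) : ℂ := fourier 1 x

/-- The Möbius transformation `μ` viewed as a self-map of `𝕋`. -/
def mobiusT (α : ℂ) (x : Tc) : Tc := ((Complex.arg (mobius α (circlePt x)) : ℝ) : Tc)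

/-- The weight `√(1 − |α|²)/(1 − ᾱz)` in the definition of `U_μ`. -/
def umuWeight (α : ℂ) (x : Tc) : ℂ :=
  (Real.sqrt (1 - ‖α‖ ^ 2) : ℂ) / (1 - (starRingEnd ℂ) α * circlePt x)

/-- `U` is the operator `U_μ`: `(U_μ f)(z) = (√(1 − |α|²)/(1 − ᾱz))·f(μ(z))` a.e. -/
def IsUmu (α : ℂ) (U : Ltwo → Ltwo) : Prop :=
  ∀ f : Ltwo, ((U f : Ltwo) : Tc → ℂ) =ᵐ[muc]
    fun x => umuWeight α x * (f : Tc → ℂ) (mobiusT α x)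


/-! ### Auxiliary lemmas for the Frostman shift theorem -/

open ComplexConjugate

section Aux

theorem fourierCoeff_conj (f : Tc → ℂ) (n : ℤ) :
    fourierCoeff (fun x => conj (f x)) n = conj (fourierCoeff f (-n)) := by
  unfold fourierCoeff
  rw [← integral_conj]
  apply integral_congr_ae
  apply Eventually.of_forall
  intro x
  simp only [smul_eq_mul, map_mul, neg_neg]
  rw [← fourier_neg]

theorem inner_tsum (F G : Ltwo) :
    (@inner ℂ Ltwo _ F G) =
      ∑' m : ℤ, conj (fourierCoeff (F : Tc → ℂ) m) * fourierCoeff (G : Tc → ℂ) m := by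
  rw [← fourierBasis.repr.inner_map_map F G, lp.inner_eq_tsum]
  congr 1; funext m
  rw [fourierBasis_repr, fourierBasis_repr, RCLike.inner_apply]
  ring

theorem fourierCoeff_mul_eq_tsum {u : Tc → ℂ} (hu : AEStronglyMeasurable u muc) {C : ℝ}
    (hb : ∀ᵐ x ∂muc, ‖u x‖ ≤ C) (f : Ltwo) (n : ℤ) :
    fourierCoeff (fun x => u x * (f : Tc → ℂ) x) n
      = ∑' m : ℤ, fourierCoeff u (n - m) * fourierCoeff (f : Tc → ℂ) m := by
  have hQm : MemLp (fun x => conj (fourier (-n) x * u x)) 2 muc := by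
    refine MemLp.of_bound ?_ C ?_
    · exact Complex.continuous_conj.comp_aestronglyMeasurable
        (((map_continuous (fourier (-n))).aestronglyMeasurable).mul hu)
    · filter_upwards [hb] with x hx
      rw [RCLike.norm_conj, norm_mul]
      calc ‖fourier (-n) x‖ * ‖u x‖ ≤ 1 * ‖u x‖ :=
            mul_le_mul_of_nonneg_right (fourier_norm_one _ _) (norm_nonneg _)
        _ = ‖u x‖ := one_mul _
        _ ≤ C := hx
  set Q := hQm.toLp _ with hQ
  have h1 : fourierCoeff (fun x => u x * (f : Tc → ℂ) x) n = @inner ℂ Ltwo _ Q f := by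
    rw [L2.inner_def]
    unfold fourierCoeff
    apply integral_congr_ae
    filter_upwards [hQm.coeFn_toLp] with x hx
    rw [RCLike.inner_apply, hx]
    simp only [smul_eq_mul, map_mul, RingHomCompTriple.comp_apply, RingHom.id_apply,
      starRingEnd_self_apply]
    ring
  rw [h1, inner_tsum]
  congr 1; funext m
  have hQc : fourierCoeff (Q : Tc → ℂ) m = conj (fourierCoeff u (n - m)) := by
    rw [fourierCoeff_congr_ae hQm.coeFn_toLp, fourierCoeff_conj, fourierCoeff_fourier_mul]
    congr 2
    omega
  rw [hQc, starRingEnd_self_apply]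

theorem fourierCoeff_mul_vanish {u : Tc → ℂ} (hu : AEStronglyMeasurable u muc) {C : ℝ}
    (hb : ∀ᵐ x ∂muc, ‖u x‖ ≤ C) (f : Ltwo) {a b : ℤ}
    (hua : ∀ k : ℤ, k < a → fourierCoeff u k = 0)
    (hfb : ∀ m : ℤ, m < b → fourierCoeff (f : Tc → ℂ) m = 0) :
    ∀ n : ℤ, n < a + b → fourierCoeff (fun x => u x * (f : Tc → ℂ) x) n = 0 := by
  intro n hn
  rw [fourierCoeff_mul_eq_tsum hu hb]
  have hz : ∀ m : ℤ, fourierCoeff u (n - m) * fourierCoeff (f : Tc → ℂ) m = 0 := by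
    intro m
    rcases lt_or_ge m b with h | h
    · rw [hfb m h, mul_zero]
    · rw [hua _ (by omega), zero_mul]
  simp only [hz, tsum_zero]

/-- Multiplication of `f ∈ L²` by a bounded a.e.-strongly-measurable function. -/
def mulL {u : Tc → ℂ} (hu : AEStronglyMeasurable u muc) {C : ℝ}
    (hb : ∀ᵐ x ∂muc, ‖u x‖ ≤ C) (f : Ltwo) : Ltwo :=
  (memLp_mul_of_bounded hu hb f).toLp _

theorem mulL_coe {u : Tc → ℂ} (hu : AEStronglyMeasurable u muc) {C : ℝ}
    (hb : ∀ᵐ x ∂muc, ‖u x‖ ≤ C) (f : Ltwo) :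
    (mulL hu hb f : Tc → ℂ) =ᵐ[muc] fun x => u x * (f : Tc → ℂ) x :=
  MemLp.coeFn_toLp _

theorem mulL_mem_Hardy {u : Tc → ℂ} (hu : AEStronglyMeasurable u muc) {C : ℝ}
    (hb : ∀ᵐ x ∂muc, ‖u x‖ ≤ C) (hu0 : ∀ k : ℤ, k < 0 → fourierCoeff u k = 0)
    {f : Ltwo} (hf : f ∈ Hardy) : mulL hu hb f ∈ Hardy := by
  rw [mem_Hardy_iff]
  intro n hn
  rw [fourierCoeff_congr_ae (mulL_coe hu hb f)]
  exact fourierCoeff_mul_vanish hu hb f hu0 (mem_Hardy_iff.mp hf) n (by omega)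

/-- The monomial `e_n`, as an element of `H²` (for `n ≥ 0`). -/
def enH (n : ℤ) (hn : 0 ≤ n) : Hd :=
  ⟨fourierLp 2 n, by
    rw [mem_Hardy_iff]
    intro m hm
    rw [← fourierBasis_repr]
    have h1 : (fourierLp (T := 2 * Real.pi) 2 n) = fourierBasis n := by
      rw [coe_fourierBasis]
    rw [h1, HilbertBasis.repr_self, lp.single_apply]
    rw [Pi.single_apply, if_neg (by omega : m ≠ n)]⟩

theorem conj_aesm {v : Tc → ℂ} (hv : AEStronglyMeasurable v muc) :
    AEStronglyMeasurable (fun x => conj (v x)) muc :=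
  Complex.continuous_conj.comp_aestronglyMeasurable hv

/-- Fourier characterization of orthogonality to `θH²`. -/
theorem orth_char {Θ : Hd} (hbd : ∀ᵐ x ∂muc, ‖((Θ : Ltwo) : Tc → ℂ) x‖ ≤ 1) (h : Ltwo) :
    (∀ g ∈ thetaHardy Θ, ipL h g = 0) ↔
      (∀ n : ℤ, 0 ≤ n →
        fourierCoeff (fun x => conj (((Θ : Ltwo) : Tc → ℂ) x) * (h : Tc → ℂ) x) n = 0) := by
  have hmeas := Lp.aestronglyMeasurable (Θ : Ltwo)
  constructor
  · intro H n hn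
    set g : Ltwo := mulL hmeas hbd (enH n hn : Ltwo) with hg
    have hgTH : g ∈ thetaHardy Θ := ⟨enH n hn, mulL_coe _ _ _⟩
    have h0 := H g hgTH
    rw [ipL, L2.inner_def] at h0
    rw [← h0]
    unfold fourierCoeff
    apply integral_congr_ae
    have hen : ((enH n hn : Ltwo) : Tc → ℂ) =ᵐ[muc] fourier n := coeFn_fourierLp 2 n
    filter_upwards [mulL_coe hmeas hbd (enH n hn : Ltwo), hen] with x hx he
    rw [RCLike.inner_apply, hx, he]
    simp only [smul_eq_mul, map_mul]
    rw [← fourier_neg]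
    ring
  · intro H g hgTH
    obtain ⟨fh, hfh⟩ := hgTH
    have hVm : MemLp (fun x => conj (((Θ : Ltwo) : Tc → ℂ) x) * (h : Tc → ℂ) x) 2 muc := by
      refine memLp_mul_of_bounded (conj_aesm hmeas) (C := 1) ?_ h
      filter_upwards [hbd] with x hx
      rwa [RCLike.norm_conj]
    have hip : ipL h g = @inner ℂ Ltwo _ (fh : Ltwo) (hVm.toLp _) := by
      rw [ipL, L2.inner_def, L2.inner_def]
      apply integral_congr_ae
      filter_upwards [hfh, hVm.coeFn_toLp] with x h1 h2
      rw [RCLike.inner_apply, RCLike.inner_apply, h1, h2]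
      simp only [map_mul]
      ring
    rw [hip, inner_tsum]
    have hz : ∀ m : ℤ, conj (fourierCoeff ((fh : Ltwo) : Tc → ℂ) m) *
        fourierCoeff ((hVm.toLp _ : Ltwo) : Tc → ℂ) m = 0 := by
      intro m
      rcases lt_or_ge m 0 with hm | hm
      · rw [mem_Hardy_iff.mp fh.2 m hm]; simp
      · rw [fourierCoeff_congr_ae hVm.coeFn_toLp, H m hm, mul_zero]
    simp only [hz, tsum_zero]

theorem KspaceL_iff {Θ : Hd} (hbd : ∀ᵐ x ∂muc, ‖((Θ : Ltwo) : Tc → ℂ) x‖ ≤ 1) (h : Ltwo) :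
    h ∈ KspaceL Θ ↔
      ((∀ n : ℤ, n < 0 → fourierCoeff (h : Tc → ℂ) n = 0) ∧
        (∀ n : ℤ, 0 ≤ n →
          fourierCoeff (fun x => conj (((Θ : Ltwo) : Tc → ℂ) x) * (h : Tc → ℂ) x) n = 0)) := by
  rw [KspaceL, Set.mem_setOf_eq, mem_Hardy_iff, orth_char hbd]

/-- Multiplication by a bounded function, as a continuous linear map on `L²`. -/
def mulCLM {u : Tc → ℂ} (hu : AEStronglyMeasurable u muc) {C : ℝ}
    (hb : ∀ᵐ x ∂muc, ‖u x‖ ≤ C) : Ltwo →L[ℂ] Ltwo :=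
  LinearMap.mkContinuous
    { toFun := mulL hu hb
      map_add' := fun f g => by
        apply Lp.ext
        filter_upwards [mulL_coe hu hb (f + g), mulL_coe hu hb f, mulL_coe hu hb g,
          Lp.coeFn_add f g, Lp.coeFn_add (mulL hu hb f) (mulL hu hb g)] with x h1 h2 h3 h4 h5
        rw [h1, h5]
        simp only [Pi.add_apply, h2, h3, h4, mul_add]
      map_smul' := fun c f => by
        apply Lp.ext
        filter_upwards [mulL_coe hu hb (c • f), mulL_coe hu hb f,
          Lp.coeFn_smul c f, Lp.coeFn_smul c (mulL hu hb f)] with x h1 h2 h3 h4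
        simp only [RingHom.id_apply]
        rw [h1, h4]
        simp only [Pi.smul_apply, h2, h3, smul_eq_mul]
        ring }
    (max C 0)
    (by
      intro f
      simp only [LinearMap.coe_mk, AddHom.coe_mk]
      rw [mulL, Lp.norm_toLp]
      have h1 : eLpNorm (fun x => u x * (f : Tc → ℂ) x) 2 muc ≤
          eLpNorm (fun x => ((max C 0 : ℝ) : ℂ) * (f : Tc → ℂ) x) 2 muc := by
        apply eLpNorm_mono_ae
        filter_upwards [hb] with x hx
        rw [norm_mul, norm_mul, Complex.norm_real, Real.norm_eq_abs,
          _root_.abs_of_nonneg (le_max_right C 0)]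
        exact mul_le_mul_of_nonneg_right (hx.trans (le_max_left C 0)) (norm_nonneg _)
      have he : (fun x => ((max C 0 : ℝ) : ℂ) * (f : Tc → ℂ) x) =
          ((max C 0 : ℝ) : ℂ) • ((f : Ltwo) : Tc → ℂ) := rfl
      have h2 : eLpNorm (fun x => ((max C 0 : ℝ) : ℂ) * (f : Tc → ℂ) x) 2 muc =
          ‖((max C 0 : ℝ) : ℂ)‖₊ • eLpNorm ((f : Ltwo) : Tc → ℂ) 2 muc := by
        rw [he]; exact eLpNorm_const_smul _ _ 2 muc
      have h3 := h1.trans_eq h2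
      have h4 : ((‖((max C 0 : ℝ) : ℂ)‖₊ : ENNReal) * eLpNorm (f : Tc → ℂ) 2 muc) ≠ ⊤ :=
        ENNReal.mul_ne_top ENNReal.coe_ne_top (Lp.eLpNorm_ne_top f)
      calc (eLpNorm (fun x => u x * (f : Tc → ℂ) x) 2 muc).toReal
          ≤ ((‖((max C 0 : ℝ) : ℂ)‖₊ : ENNReal) * eLpNorm (f : Tc → ℂ) 2 muc).toReal := by
            apply ENNReal.toReal_mono h4
            simpa [ENNReal.smul_def] using h3
        _ = max C 0 * ‖f‖ := by
            rw [ENNReal.toReal_mul, Lp.norm_def]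
            congr 1
            simp [Complex.norm_real, _root_.abs_of_nonneg (le_max_right C 0)]
        _ = max C 0 * ‖f‖ := rfl)

theorem mulCLM_apply {u : Tc → ℂ} (hu : AEStronglyMeasurable u muc) {C : ℝ}
    (hb : ∀ᵐ x ∂muc, ‖u x‖ ≤ C) (f : Ltwo) : mulCLM hu hb f = mulL hu hb f := rfl

theorem innerFn_norm_le {Θ : Hd} (hΘ : IsInnerFn Θ) :
    ∀ᵐ x ∂muc, ‖((Θ : Ltwo) : Tc → ℂ) x‖ ≤ 1 := by
  filter_upwards [hΘ] with x hx
  rw [hx]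

theorem denom_ne_zero {α z : ℂ} (hα : ‖α‖ < 1) (hz : ‖z‖ = 1) :
    1 - conj α * z ≠ 0 := by
  intro h
  have h2 : conj α * z = 1 := by linear_combination -h
  have h1 : ‖conj α * z‖ = ‖α‖ := by
    rw [norm_mul, Complex.norm_conj, hz, mul_one]
  rw [h2] at h1
  simp only [norm_one] at h1
  linarith

theorem denom_abs_ge {α z : ℂ} (hz : ‖z‖ = 1) :
    1 - ‖α‖ ≤ ‖1 - conj α * z‖ := by
  have h := norm_sub_norm_le (1 : ℂ) (conj α * z)
  simpa [norm_mul, Complex.norm_conj, hz] using h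

theorem Lp_norm_le_one {f : Ltwo} (h : ∀ᵐ x ∂muc, ‖(f : Tc → ℂ) x‖ ≤ 1) : ‖f‖ ≤ 1 := by
  have h2 := Lp.norm_le_of_ae_bound (μ := muc) (p := 2) (f := f) zero_le_one h
  have h3 : measureUnivNNReal muc = 1 := by
    simp [measureUnivNNReal, measure_univ]
  rw [h3] at h2
  simpa using h2

theorem oneH_coe : ((oneH : Ltwo) : Tc → ℂ) =ᵐ[muc] fun _ => 1 := by
  have h := coeFn_fourierLp (T := 2 * Real.pi) 2 (0 : ℤ)
  filter_upwards [h] with x hx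
  rw [show ((oneH : Ltwo) : Tc → ℂ) = ((fourierLp 2 (0 : ℤ) : Lp ℂ 2 AddCircle.haarAddCircle) :
    Tc → ℂ) from rfl, hx]
  exact fourier_zero

/-- Construction of `(1 - ᾱθ)⁻¹` as an element of `H²`. -/
theorem exists_hinv (Θ : Hd) (hΘ : IsInnerFn Θ) (α : ℂ) (hα : ‖α‖ < 1) :
    ∃ hv : Hd, ((hv : Ltwo) : Tc → ℂ) =ᵐ[muc]
      fun x => (1 - conj α * ((Θ : Ltwo) : Tc → ℂ) x)⁻¹ := by
  have hmeas := Lp.aestronglyMeasurable (Θ : Ltwo)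
  have hbd := innerFn_norm_le hΘ
  have hΘcoeffs : ∀ k : ℤ, k < 0 → fourierCoeff ((Θ : Ltwo) : Tc → ℂ) k = 0 :=
    mem_Hardy_iff.mp Θ.2
  set M := mulCLM hmeas hbd with hM
  set T : ℕ → Ltwo := fun k => (fun g => M g)^[k] (oneH : Ltwo) with hT
  have hTs : ∀ k, T (k + 1) = M (T k) := by
    intro k
    rw [hT]
    exact Function.iterate_succ_apply' _ _ _
  have hTcoe : ∀ k, ((T k : Ltwo) : Tc → ℂ) =ᵐ[muc]
      fun x => ((Θ : Ltwo) : Tc → ℂ) x ^ k := by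
    intro k
    induction k with
    | zero => simpa [hT] using oneH_coe
    | succ k ih =>
      rw [hTs]
      filter_upwards [mulL_coe hmeas hbd (T k), ih] with x h1 h2
      rw [show (M (T k) : Tc → ℂ) x = (mulL hmeas hbd (T k) : Tc → ℂ) x from rfl] at *
      rw [h1, h2, pow_succ]
      ring
  have hTmem : ∀ k, T k ∈ Hardy := by
    intro k
    induction k with
    | zero => exact oneH.2
    | succ k ih =>
      rw [hTs]
      exact mulL_mem_Hardy hmeas hbd hΘcoeffs ih
  have hTnorm : ∀ k, ‖T k‖ ≤ 1 := by
    intro k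
    apply Lp_norm_le_one
    filter_upwards [hTcoe k, hΘ] with x h1 h2
    rw [h1, norm_pow, h2, one_pow]
  set a : ℕ → Ltwo := fun k => (conj α) ^ k • T k with ha
  have hna : ∀ k, ‖a k‖ ≤ ‖α‖ ^ k := by
    intro k
    rw [ha]
    simp only [norm_smul, norm_pow, RCLike.norm_conj]
    calc ‖α‖ ^ k * ‖T k‖ ≤ ‖α‖ ^ k * 1 :=
          mul_le_mul_of_nonneg_left (hTnorm k) (by positivity)
      _ = ‖α‖ ^ k := mul_one _
  have hsum : Summable a :=
    Summable.of_norm_bounded (summable_geometric_of_lt_one (norm_nonneg α) hα) hna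
  set hvL : Ltwo := ∑' k, a k with hhvL
  have hmem : hvL ∈ Hardy := by
    refine hardy_isClosed.mem_of_tendsto hsum.hasSum ?_
    apply Eventually.of_forall
    intro s
    exact Submodule.sum_mem Hardy fun k _ => Submodule.smul_mem Hardy _ (hTmem k)
  have hid : hvL - (conj α) • M hvL = (oneH : Ltwo) := by
    have h1 : (conj α) • M hvL = ∑' k, a (k + 1) := by
      have h2 : ((conj α) • M) hvL = ∑' k, ((conj α) • M) (a k) :=
        ContinuousLinearMap.map_tsum _ hsum
      have h3 : ∀ k, ((conj α) • M) (a k) = a (k + 1) := by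
        intro k
        rw [ha]
        simp only [ContinuousLinearMap.smul_apply, ContinuousLinearMap.map_smul, hTs]
        rw [smul_smul, ← pow_succ']
      rw [show (conj α) • M hvL = ((conj α) • M) hvL from rfl, h2]
      exact tsum_congr h3
    have h4 : ∑' k, a k = a 0 + ∑' k, a (k + 1) := hsum.tsum_eq_zero_add
    have h5 : a 0 = (oneH : Ltwo) := by
      rw [ha]
      simp only [pow_zero, one_smul]
      rfl
    rw [h1, hhvL, h4, h5]
    abel
  have hae : ∀ᵐ x ∂muc, hvL x - conj α * (((Θ : Ltwo) : Tc → ℂ) x * hvL x) = 1 := by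
    have hco2 : ((hvL - (conj α) • M hvL : Ltwo) : Tc → ℂ) =ᵐ[muc] ((oneH : Ltwo) : Tc → ℂ) := by
      rw [hid]
    filter_upwards [hco2, Lp.coeFn_sub hvL ((conj α) • M hvL), Lp.coeFn_smul (conj α) (M hvL),
      mulL_coe hmeas hbd hvL, oneH_coe] with x h1 h2 h3 h4 h5
    rw [h2] at h1
    simp only [Pi.sub_apply] at h1
    rw [h3] at h1
    simp only [Pi.smul_apply, smul_eq_mul] at h1
    rw [show (M hvL : Tc → ℂ) x = (mulL hmeas hbd hvL : Tc → ℂ) x from rfl, h4] at h1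
    rw [h1, h5]
  refine ⟨⟨hvL, hmem⟩, ?_⟩
  filter_upwards [hae, hΘ] with x h1 h2
  have hd : 1 - conj α * ((Θ : Ltwo) : Tc → ℂ) x ≠ 0 := denom_ne_zero hα h2
  rw [inv_eq_one_div, eq_div_iff hd]
  show ((hvL : Ltwo) : Tc → ℂ) x * _ = 1
  linear_combination h1

theorem unit_mul_conj {z : ℂ} (hz : ‖z‖ = 1) : z * conj z = 1 := by
  rw [Complex.mul_conj, Complex.normSq_eq_norm_sq, hz]
  norm_num

theorem mobius_abs {α z : ℂ} (hα : ‖α‖ < 1) (hz : ‖z‖ = 1) :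
    ‖(α - z) / (1 - conj α * z)‖ = 1 := by
  have hd := denom_ne_zero hα hz
  have hzz := unit_mul_conj hz
  have key : (α - z) * conj (α - z) = (1 - conj α * z) * conj (1 - conj α * z) := by
    simp only [map_sub, map_mul, map_one, starRingEnd_self_apply]
    linear_combination (1 - α * conj α) * hzz
  have hnsq : Complex.normSq (α - z) = Complex.normSq (1 - conj α * z) := by
    have h1 := (Complex.mul_conj (α - z)).symm.trans
      (key.trans (Complex.mul_conj (1 - conj α * z)))
    exact_mod_cast h1
  have habs : ‖α - z‖ = ‖1 - conj α * z‖ := by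
    rw [Complex.norm_def, Complex.norm_def, hnsq]
  rw [norm_div, habs, div_self (norm_ne_zero_iff.mpr hd)]

/-- Construction of the Frostman shift `θ_α` as an inner function in `H²`. -/
theorem exists_thetaAlpha (Θ : Hd) (hΘ : IsInnerFn Θ) (α : ℂ) (hα : ‖α‖ < 1) :
    ∃ Θα : Hd, (((Θα : Ltwo) : Tc → ℂ) =ᵐ[muc]
        fun x => (α - ((Θ : Ltwo) : Tc → ℂ) x) /
          (1 - conj α * ((Θ : Ltwo) : Tc → ℂ) x)) ∧ IsInnerFn Θα := by
  obtain ⟨hv, hhv⟩ := exists_hinv Θ hΘ α hα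
  have hmeas := Lp.aestronglyMeasurable (Θ : Ltwo)
  have hbd := innerFn_norm_le hΘ
  set θαL : Ltwo := α • (hv : Ltwo) - mulL hmeas hbd (hv : Ltwo) with hθαL
  have hmem : θαL ∈ Hardy :=
    Submodule.sub_mem _ (Submodule.smul_mem _ _ hv.2)
      (mulL_mem_Hardy hmeas hbd (mem_Hardy_iff.mp Θ.2) hv.2)
  have hcoe : (θαL : Tc → ℂ) =ᵐ[muc]
      fun x => (α - ((Θ : Ltwo) : Tc → ℂ) x) / (1 - conj α * ((Θ : Ltwo) : Tc → ℂ) x) := by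
    filter_upwards [Lp.coeFn_sub (α • (hv : Ltwo)) (mulL hmeas hbd (hv : Ltwo)),
      Lp.coeFn_smul α (hv : Ltwo), mulL_coe hmeas hbd (hv : Ltwo), hhv, hΘ]
      with x h1 h2 h3 h4 h5
    rw [h1]
    simp only [Pi.sub_apply]
    rw [h2, h3]
    simp only [Pi.smul_apply, smul_eq_mul]
    rw [h4]
    have hd : 1 - conj α * ((Θ : Ltwo) : Tc → ℂ) x ≠ 0 := denom_ne_zero hα h5
    field_simp
  refine ⟨⟨θαL, hmem⟩, hcoe, ?_⟩
  filter_upwards [hcoe, hΘ] with x h1 h2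
  rw [show ((((⟨θαL, hmem⟩ : Hd) : Ltwo)) : Tc → ℂ) x = (θαL : Tc → ℂ) x from rfl, h1]
  exact mobius_abs hα h2

theorem conj_ne_zero {z : ℂ} (hz : z ≠ 0) : conj z ≠ 0 := by
  intro h
  apply hz
  have := congrArg conj h
  simpa using this

/-- The Crofoot transform: multiplication by `√(1-|α|²)/(1-ᾱθ)` maps `K_θ`
isometrically into `K_{θ_α}`. -/
theorem crofoot (Θ : Hd) (hΘ : IsInnerFn Θ) (α : ℂ) (hα : ‖α‖ < 1)
    (Θα : Hd) (hΘαi : IsInnerFn Θα)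
    (hΘα : ((Θα : Ltwo) : Tc → ℂ) =ᵐ[muc]
      fun x => (α - ((Θ : Ltwo) : Tc → ℂ) x) / (1 - conj α * ((Θ : Ltwo) : Tc → ℂ) x))
    (f : Ltwo) (hf : f ∈ KspaceL Θ) :
    ∃ g : Ltwo, g ∈ KspaceL Θα ∧ ‖g‖ = ‖f‖ ∧
      (g : Tc → ℂ) =ᵐ[muc] fun x =>
        ((Real.sqrt (1 - ‖α‖ ^ 2) : ℂ) /
          (1 - conj α * ((Θ : Ltwo) : Tc → ℂ) x)) * (f : Tc → ℂ) x := by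
  obtain ⟨hv, hhv⟩ := exists_hinv Θ hΘ α hα
  have hmeas := Lp.aestronglyMeasurable (Θ : Ltwo)
  have hbd := innerFn_norm_le hΘ
  set c : ℝ := 1 - ‖α‖ ^ 2 with hc
  have hcpos : 0 < c := by nlinarith [norm_nonneg α]
  have hvmeas := Lp.aestronglyMeasurable (hv : Ltwo)
  have hvbd : ∀ᵐ x ∂muc, ‖((hv : Ltwo) : Tc → ℂ) x‖ ≤ (1 - ‖α‖)⁻¹ := by
    filter_upwards [hhv, hΘ] with x h1 h2
    rw [h1, norm_inv]
    exact inv_anti₀ (by linarith) (denom_abs_ge h2)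
  have hvcoeffs : ∀ k : ℤ, k < 0 → fourierCoeff ((hv : Ltwo) : Tc → ℂ) k = 0 :=
    mem_Hardy_iff.mp hv.2
  set W : Ltwo := (Real.sqrt c : ℂ) • mulL hvmeas hvbd f with hW
  have hWcoe : (W : Tc → ℂ) =ᵐ[muc]
      fun x => (Real.sqrt c : ℂ) * (((hv : Ltwo) : Tc → ℂ) x * (f : Tc → ℂ) x) := by
    filter_upwards [Lp.coeFn_smul ((Real.sqrt c : ℂ)) (mulL hvmeas hvbd f),
      mulL_coe hvmeas hvbd f] with x h1 h2
    rw [hW, h1]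
    simp only [Pi.smul_apply, smul_eq_mul, h2]
  have hWcoe2 : (W : Tc → ℂ) =ᵐ[muc] fun x =>
      ((Real.sqrt c : ℂ) / (1 - conj α * ((Θ : Ltwo) : Tc → ℂ) x)) * (f : Tc → ℂ) x := by
    filter_upwards [hWcoe, hhv] with x h1 h2
    rw [h1, h2, div_eq_mul_inv]
    ring
  -- Hardy membership
  have hfHardy : f ∈ Hardy := hf.1
  have hWHardy : W ∈ Hardy :=
    Submodule.smul_mem _ _ (mulL_mem_Hardy hvmeas hvbd hvcoeffs hfHardy)
  -- the function r = conj Θ * f, whose nonneg coefficients vanish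
  have hr : ∀ n : ℤ, 0 ≤ n →
      fourierCoeff (fun x => conj (((Θ : Ltwo) : Tc → ℂ) x) * (f : Tc → ℂ) x) n = 0 :=
    (orth_char hbd f).mp hf.2
  -- the element  R = Θ * conj f  (which equals conj r a.e.)
  have hΘbdd : IsBddFn ((Θ : Ltwo) : Tc → ℂ) :=
    ⟨(Lp.stronglyMeasurable (Θ : Ltwo)).measurable, 1, hbd⟩
  have hRm : MemLp (fun x => ((Θ : Ltwo) : Tc → ℂ) x * conj ((f : Tc → ℂ) x)) 2 muc :=
    memLp_mul_conj hΘbdd f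
  set R : Ltwo := hRm.toLp _ with hR
  have hRcoeffs : ∀ m : ℤ, m < 1 → fourierCoeff (R : Tc → ℂ) m = 0 := by
    intro m hm
    rw [fourierCoeff_congr_ae hRm.coeFn_toLp]
    have heq : (fun x => ((Θ : Ltwo) : Tc → ℂ) x * conj ((f : Tc → ℂ) x)) =
        fun x => conj (conj (((Θ : Ltwo) : Tc → ℂ) x) * (f : Tc → ℂ) x) := by
      funext x
      simp only [map_mul, starRingEnd_self_apply]
    rw [heq, fourierCoeff_conj, hr (-m) (by omega), map_zero]
  -- the bounded multiplier  u = -√c * hv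
  have humeas : AEStronglyMeasurable
      (fun x => -(Real.sqrt c : ℂ) * ((hv : Ltwo) : Tc → ℂ) x) muc :=
    hvmeas.const_mul _
  have hubd : ∀ᵐ x ∂muc, ‖-(Real.sqrt c : ℂ) * ((hv : Ltwo) : Tc → ℂ) x‖ ≤
      Real.sqrt c * (1 - ‖α‖)⁻¹ := by
    filter_upwards [hvbd] with x hx
    rw [norm_mul, norm_neg, Complex.norm_real, Real.norm_eq_abs,
      _root_.abs_of_nonneg (Real.sqrt_nonneg c)]
    exact mul_le_mul_of_nonneg_left hx (Real.sqrt_nonneg c)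
  have hucoeffs : ∀ k : ℤ, k < 0 →
      fourierCoeff (fun x => -(Real.sqrt c : ℂ) * ((hv : Ltwo) : Tc → ℂ) x) k = 0 := by
    intro k hk
    rw [fourierCoeff.const_mul, hvcoeffs k hk, mul_zero]
  -- orthogonality of W to Θα H²
  have horth : ∀ n : ℤ, 0 ≤ n →
      fourierCoeff (fun x => conj (((Θα : Ltwo) : Tc → ℂ) x) * (W : Tc → ℂ) x) n = 0 := by
    intro n hn
    have hBae : (fun x => ((Θα : Ltwo) : Tc → ℂ) x * conj ((W : Tc → ℂ) x)) =ᵐ[muc]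
        fun x => -(Real.sqrt c : ℂ) * ((hv : Ltwo) : Tc → ℂ) x * (R : Tc → ℂ) x := by
      filter_upwards [hΘα, hWcoe, hhv, hΘ, hRm.coeFn_toLp] with x h1 h2 h3 h4 h5
      rw [h1, h2, h3, h5]
      set z := ((Θ : Ltwo) : Tc → ℂ) x
      have hzz := unit_mul_conj h4
      have hd : 1 - conj α * z ≠ 0 := denom_ne_zero hα h4
      have hdc : 1 - α * conj z ≠ 0 := by
        intro h
        apply hd
        have := congrArg conj h
        simpa [map_sub, map_mul, map_one] using this
      simp only [map_mul, map_sub, map_one, map_inv₀, Complex.conj_ofReal,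
        starRingEnd_self_apply]
      have key : (α - z) * (1 - α * conj z)⁻¹ = -z := by
        field_simp
        linear_combination (-α) * hzz
      rw [div_eq_mul_inv]
      linear_combination ((1 - conj α * z)⁻¹ * (Real.sqrt c : ℂ) * conj ((f : Tc → ℂ) x)) * key
    have hBcoeff : ∀ m : ℤ, m < 1 →
        fourierCoeff (fun x => ((Θα : Ltwo) : Tc → ℂ) x * conj ((W : Tc → ℂ) x)) m = 0 := by
      intro m hm
      rw [fourierCoeff_congr_ae hBae]
      exact fourierCoeff_mul_vanish humeas hubd R hucoeffs hRcoeffs m (by omega)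
    have heq : (fun x => conj (((Θα : Ltwo) : Tc → ℂ) x) * (W : Tc → ℂ) x) =
        fun x => conj (((Θα : Ltwo) : Tc → ℂ) x * conj ((W : Tc → ℂ) x)) := by
      funext x
      simp only [map_mul, starRingEnd_self_apply]
    rw [heq, fourierCoeff_conj, hBcoeff (-n) (by omega), map_zero]
  -- membership in K_{Θα}
  have hWK : W ∈ KspaceL Θα := by
    rw [KspaceL_iff (innerFn_norm_le hΘαi)]
    exact ⟨mem_Hardy_iff.mp hWHardy, horth⟩
  -- isometry
  set E : Ltwo := mulL hmeas hbd (mulL hvmeas hvbd f) with hE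
  have hETH : E ∈ thetaHardy Θ :=
    ⟨⟨mulL hvmeas hvbd f, mulL_mem_Hardy hvmeas hvbd hvcoeffs hfHardy⟩, mulL_coe _ _ _⟩
  have hip0 : (@inner ℂ Ltwo _ E f) = 0 := hf.2 E hETH
  have hip0' : (@inner ℂ Ltwo _ f E) = 0 := by
    rw [← inner_conj_symm, hip0, map_zero]
  have hEcoe : (E : Tc → ℂ) =ᵐ[muc]
      fun x => ((Θ : Ltwo) : Tc → ℂ) x * (((hv : Ltwo) : Tc → ℂ) x * (f : Tc → ℂ) x) := by
    filter_upwards [mulL_coe hmeas hbd (mulL hvmeas hvbd f), mulL_coe hvmeas hvbd f]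
      with x h1 h2
    rw [hE, h1, h2]
  have hptwise : ∀ᵐ x ∂muc, (@inner ℂ ℂ _ ((W : Tc → ℂ) x) ((W : Tc → ℂ) x)) =
      (@inner ℂ ℂ _ ((f : Tc → ℂ) x) ((f : Tc → ℂ) x)) +
        conj α * (@inner ℂ ℂ _ ((f : Tc → ℂ) x) ((E : Tc → ℂ) x)) +
        α * (@inner ℂ ℂ _ ((E : Tc → ℂ) x) ((f : Tc → ℂ) x)) := by
    filter_upwards [hWcoe, hEcoe, hhv, hΘ] with x h1 h2 h3 h4
    rw [h1, h2, h3]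
    simp only [RCLike.inner_apply]
    set z := ((Θ : Ltwo) : Tc → ℂ) x
    set fx := (f : Tc → ℂ) x
    have hzz := unit_mul_conj h4
    have hd : 1 - conj α * z ≠ 0 := denom_ne_zero hα h4
    have hdc : conj (1 - conj α * z) ≠ 0 := conj_ne_zero hd
    have hsq : (Real.sqrt c : ℂ) * (Real.sqrt c : ℂ) = (c : ℂ) := by
      rw [← Complex.ofReal_mul, Real.mul_self_sqrt hcpos.le]
    have hcval : ((c : ℝ) : ℂ) = 1 - α * conj α := by
      rw [hc, Complex.mul_conj, Complex.normSq_eq_norm_sq]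
      push_cast
      ring
    simp only [map_mul, map_sub, map_one, map_inv₀, Complex.conj_ofReal,
      starRingEnd_self_apply]
    rw [show conj (1 - conj α * z) = 1 - α * conj z by simp [map_sub, map_mul]] at hdc
    have key2 : ((1 : ℂ) - α * conj α) * ((1 - conj α * z)⁻¹ * (1 - α * conj z)⁻¹) =
        1 + conj α * z * (1 - conj α * z)⁻¹ + α * conj z * (1 - α * conj z)⁻¹ := by
      field_simp
      linear_combination (α * conj α) * hzz
    linear_combination (conj fx * fx) * key2 +
      ((1 - conj α * z)⁻¹ * (1 - α * conj z)⁻¹ * (conj fx * fx)) * (hsq.trans hcval)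
  have hinner : (@inner ℂ Ltwo _ W W) = (@inner ℂ Ltwo _ f f) := by
    have i1 : Integrable (fun x => (@inner ℂ ℂ _ ((f : Tc → ℂ) x) ((f : Tc → ℂ) x))) muc :=
      L2.integrable_inner (𝕜 := ℂ) f f
    have i2 : Integrable (fun x => (@inner ℂ ℂ _ ((f : Tc → ℂ) x) ((E : Tc → ℂ) x))) muc :=
      L2.integrable_inner (𝕜 := ℂ) f E
    have i3 : Integrable (fun x => (@inner ℂ ℂ _ ((E : Tc → ℂ) x) ((f : Tc → ℂ) x))) muc :=
      L2.integrable_inner (𝕜 := ℂ) E f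
    rw [L2.inner_def, L2.inner_def]
    rw [integral_congr_ae hptwise]
    have iB : Integrable (fun x => conj α * (@inner ℂ ℂ _ ((f : Tc → ℂ) x) ((E : Tc → ℂ) x))) muc :=
      i2.const_mul _
    have iC : Integrable (fun x => α * (@inner ℂ ℂ _ ((E : Tc → ℂ) x) ((f : Tc → ℂ) x))) muc :=
      i3.const_mul _
    have iAB : Integrable (fun x => (@inner ℂ ℂ _ ((f : Tc → ℂ) x) ((f : Tc → ℂ) x)) +
        conj α * (@inner ℂ ℂ _ ((f : Tc → ℂ) x) ((E : Tc → ℂ) x))) muc := i1.add iB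
    rw [integral_add iAB iC, integral_add i1 iB]
    have e2 : ∫ x, conj α * (@inner ℂ ℂ _ ((f : Tc → ℂ) x) ((E : Tc → ℂ) x)) ∂muc
        = conj α * ∫ x, (@inner ℂ ℂ _ ((f : Tc → ℂ) x) ((E : Tc → ℂ) x)) ∂muc := by
      simpa [smul_eq_mul] using integral_smul (conj α)
        (fun x => (@inner ℂ ℂ _ ((f : Tc → ℂ) x) ((E : Tc → ℂ) x)))
    have e3 : ∫ x, α * (@inner ℂ ℂ _ ((E : Tc → ℂ) x) ((f : Tc → ℂ) x)) ∂muc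
        = α * ∫ x, (@inner ℂ ℂ _ ((E : Tc → ℂ) x) ((f : Tc → ℂ) x)) ∂muc := by
      simpa [smul_eq_mul] using integral_smul α
        (fun x => (@inner ℂ ℂ _ ((E : Tc → ℂ) x) ((f : Tc → ℂ) x)))
    rw [e2, e3, ← L2.inner_def, ← L2.inner_def, ← L2.inner_def, hip0, hip0']
    ring
  have hnorm : ‖W‖ = ‖f‖ := by
    have h1 : RCLike.re (@inner ℂ Ltwo _ W W) = RCLike.re (@inner ℂ Ltwo _ f f) := by
      rw [hinner]
    rw [@inner_self_eq_norm_mul_norm ℂ, @inner_self_eq_norm_mul_norm ℂ] at h1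
    exact (mul_self_inj_of_nonneg (norm_nonneg _) (norm_nonneg _)).mp h1
  exact ⟨W, hWK, hnorm, hWcoe2⟩

theorem csq (α : ℂ) (hα : ‖α‖ < 1) :
    (Real.sqrt (1 - ‖α‖ ^ 2) : ℂ) * (Real.sqrt (1 - ‖α‖ ^ 2) : ℂ)
      = 1 - α * conj α := by
  rw [← Complex.ofReal_mul, Real.mul_self_sqrt (by nlinarith [norm_nonneg α])]
  rw [Complex.mul_conj, Complex.normSq_eq_norm_sq]
  push_cast
  ring

theorem sqrtc_ne_zero (α : ℂ) (hα : ‖α‖ < 1) :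
    (Real.sqrt (1 - ‖α‖ ^ 2) : ℂ) ≠ 0 := by
  rw [Ne, Complex.ofReal_eq_zero]
  refine Real.sqrt_ne_zero'.mpr ?_
  nlinarith [norm_nonneg α]

theorem c_ne_zero {α : ℂ} (hα : ‖α‖ < 1) : (1 : ℂ) - α * conj α ≠ 0 := by
  intro h0
  have h1 : α * conj α = 1 := by linear_combination -h0
  have h2 : ‖α * conj α‖ = ‖α‖ * ‖α‖ := by
    rw [norm_mul, Complex.norm_conj]
  rw [h1, norm_one] at h2
  nlinarith [norm_nonneg α]

theorem denom2_eq {α z : ℂ} (hα : ‖α‖ < 1) (hz : ‖z‖ = 1) :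
    1 - conj α * ((α - z) / (1 - conj α * z)) = (1 - α * conj α) / (1 - conj α * z) := by
  have hd := denom_ne_zero hα hz
  field_simp
  ring

theorem mobius_invol {α z : ℂ} (hα : ‖α‖ < 1) (hz : ‖z‖ = 1) :
    (α - (α - z) / (1 - conj α * z)) / (1 - conj α * ((α - z) / (1 - conj α * z))) = z := by
  have hd := denom_ne_zero hα hz
  have hcne := c_ne_zero hα
  rw [denom2_eq hα hz]
  have e2 : α - (α - z) / (1 - conj α * z) = ((1 - α * conj α) * z) / (1 - conj α * z) := by
    rw [eq_div_iff hd, sub_mul, div_mul_cancel₀ _ hd]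
    ring
  rw [e2]
  field_simp

theorem weight_id {α z : ℂ} (hα : ‖α‖ < 1) (hz : ‖z‖ = 1) :
    (Real.sqrt (1 - ‖α‖ ^ 2) : ℂ) / (1 - conj α * ((α - z) / (1 - conj α * z)))
      = (1 - conj α * z) / (Real.sqrt (1 - ‖α‖ ^ 2) : ℂ) := by
  have hd := denom_ne_zero hα hz
  have hcne := c_ne_zero hα
  have hs := csq α hα
  have hs0 := sqrtc_ne_zero α hα
  rw [denom2_eq hα hz]
  rw [div_eq_div_iff (by simpa [div_eq_zero_iff] using ⟨hcne, hd⟩ : (1 - α * conj α) /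
    (1 - conj α * z) ≠ 0) hs0]
  rw [mul_div_assoc', mul_div_cancel_left₀ _ hd]
  exact hs

end Aux

/-- Frostman shift of a weighted model space: `pK_θ = (p·g_α)K_{θ_α}`. -/
theorem frostman_shift (θ : Hd) (hθ : IsInnerFn θ)
    (p : Tc → ℂ) (hp : IsIsomMult p θ)
    (α : ℂ) (hα : ‖α‖ < 1) :
    ∃ θα : Hd,
      (((θα : Ltwo) : Tc → ℂ) =ᵐ[muc]
        fun x => (α - ((θ : Ltwo) : Tc → ℂ) x) /
          (1 - (starRingEnd ℂ) α * ((θ : Ltwo) : Tc → ℂ) x)) ∧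
      IsInnerFn θα ∧
      IsIsomMult (fun x => p x * ((1 - (starRingEnd ℂ) α * ((θ : Ltwo) : Tc → ℂ) x) /
        (Real.sqrt (1 - ‖α‖ ^ 2) : ℂ))) θα ∧
      wModel p θ = wModel (fun x => p x *
        ((1 - (starRingEnd ℂ) α * ((θ : Ltwo) : Tc → ℂ) x) /
          (Real.sqrt (1 - ‖α‖ ^ 2) : ℂ))) θα := by
  obtain ⟨θα, hθαcoe, hθαi⟩ := exists_thetaAlpha θ hθ α hα
  have hs0 := sqrtc_ne_zero α hα
  have hmob : ((θ : Ltwo) : Tc → ℂ) =ᵐ[muc]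
      fun x => (α - ((θα : Ltwo) : Tc → ℂ) x) / (1 - conj α * ((θα : Ltwo) : Tc → ℂ) x) := by
    filter_upwards [hθαcoe, hθ] with x h1 h2
    rw [h1]
    exact (mobius_invol hα h2).symm
  have hweight : ∀ᵐ x ∂muc,
      (Real.sqrt (1 - ‖α‖ ^ 2) : ℂ) / (1 - conj α * ((θα : Ltwo) : Tc → ℂ) x)
        = (1 - conj α * ((θ : Ltwo) : Tc → ℂ) x) /
          (Real.sqrt (1 - ‖α‖ ^ 2) : ℂ) := by
    filter_upwards [hθαcoe, hθ] with x h1 h2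
    rw [h1]
    exact weight_id hα h2
  have hmeasθ : Measurable ((θ : Ltwo) : Tc → ℂ) := (Lp.stronglyMeasurable _).measurable
  refine ⟨θα, hθαcoe, hθαi, ⟨?_, ?_⟩, ?_⟩
  · exact hp.1.mul ((measurable_const.sub (hmeasθ.const_mul _)).div_const _)
  · intro h hh
    obtain ⟨g', hg'K, hg'n, hg'coe⟩ := crofoot θα hθαi α hα θ hθ hmob (h : Ltwo) hh
    obtain ⟨g, hgcoe, hgn⟩ := hp.2 ⟨g', hg'K.1⟩ hg'K
    have hco : (((⟨g', hg'K.1⟩ : Hd) : Ltwo)) = g' := rfl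
    rw [hco] at hgcoe hgn
    refine ⟨g, ?_, hgn.trans hg'n⟩
    filter_upwards [hgcoe, hg'coe, hweight] with x h1 h2 h3
    rw [h1, h2, h3]
    ring
  · ext g
    simp only [wModel, Set.mem_setOf_eq]
    constructor
    · rintro ⟨h, hhK, hgcoe⟩
      obtain ⟨g₂, hg₂K, _, hg₂coe⟩ := crofoot θ hθ α hα θα hθαi hθαcoe (h : Ltwo) hhK
      refine ⟨⟨g₂, hg₂K.1⟩, hg₂K, ?_⟩
      have hco : (((⟨g₂, hg₂K.1⟩ : Hd) : Ltwo)) = g₂ := rfl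
      rw [hco]
      filter_upwards [hgcoe, hg₂coe, hθ] with x h1 h2 h3
      rw [h1, h2]
      have hd := denom_ne_zero hα h3
      field_simp
    · rintro ⟨h₂, hh₂K, hgcoe⟩
      obtain ⟨g₂, hg₂K, _, hg₂coe⟩ := crofoot θα hθαi α hα θ hθ hmob (h₂ : Ltwo) hh₂K
      refine ⟨⟨g₂, hg₂K.1⟩, hg₂K, ?_⟩
      have hco : (((⟨g₂, hg₂K.1⟩ : Hd) : Ltwo)) = g₂ := rfl
      rw [hco]
      filter_upwards [hgcoe, hg₂coe, hweight] with x h1 h2 h3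
      rw [h1, h2, h3]
      ring

end HankelSchmidt
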